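/- Let k ≥ 2 and let w be a word in the generators b_1, …, b_{k+1} of G_{k+1}^k (a list over Fin (k+1)). For each position p of w at which the letter b_{k+1} occurs, define its index m_p : {1, …, k−1} → ℤ/2 by m_p(j) = (number of occurrences of b_j among the letters of w before position p) + (number of occurrences of b_k among the letters of w before position p) modulo 2. Let F_{k−1} be the free product of copies of ℤ/2 indexed by the functions {1, …, k−1} → ℤ/2, i.e. the presented group with one generator c_m for each function m : Fin (k−1) → ZMod 2 and relators the squares c_m², and let f(w) ∈ F_{k−1} be the product, over the occurrences of b_{k+1} in w taken in order, of the generators c_{m_p}. If f(w) = 1 in F_{k−1}, then the image of w in G_{k+1}^k belongs to the subgroup H_k. -/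

import Mathlib

/-- The relators of the group `G_{k+1}^k`: the squares `b_i²` of all generators, together with
`(b_{σ(1)} b_{σ(2)} ⋯ b_{σ(k+1)})²` for every permutation `σ` of the `k+1` generators. -/
def relsG (k : ℕ) : Set (FreeGroup (Fin (k + 1))) :=
  (Set.range fun i : Fin (k + 1) => FreeGroup.of i ^ 2) ∪
    (Set.range fun σ : Equiv.Perm (Fin (k + 1)) =>
      ((List.ofFn fun j : Fin (k + 1) => FreeGroup.of (σ j)).prod) ^ 2)

/-- The group `G_{k+1}^k`. -/
abbrev Gnk (k : ℕ) : Type := PresentedGroup (relsG k)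

/-- The subgroup `H_k` of `G_{k+1}^k` generated by the (images of the) first `k` generators
`b_1, …, b_k`. -/
def Hk (k : ℕ) : Subgroup (Gnk k) :=
  Subgroup.closure (Set.range fun i : Fin k =>
    PresentedGroup.of (rels := relsG k) (Fin.castSucc i))

/-- The relators of the free product `F_{k-1}` of copies of `ℤ/2` indexed by functions
`Fin (k-1) → ZMod 2`: the squares of all generators. -/
def relsF (k : ℕ) : Set (FreeGroup ((Fin (k - 1)) → ZMod 2)) :=
  Set.range fun m : (Fin (k - 1)) → ZMod 2 => FreeGroup.of m ^ 2

/-- The free product `F_{k-1} = ℤ/2 * ⋯ * ℤ/2` (one copy for each `m : Fin (k-1) → ZMod 2`). -/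
abbrev Fkm1 (k : ℕ) : Type := PresentedGroup (relsF k)

/-- The index of an occurrence of the letter `b_{k+1}` preceded by the prefix `pre`: the
function `Fin (k-1) → ZMod 2` sending `j` to the number of occurrences of `b_j` in `pre` plus
the number of occurrences of `b_k` in `pre`, modulo 2.  (The generator `b_j`, `1 ≤ j ≤ k-1`,
is the letter `⟨j-1, _⟩ : Fin (k+1)` and `b_k` is the letter `⟨k-1, _⟩ : Fin (k+1)`.) -/
def idx (k : ℕ) (pre : List (Fin (k + 1))) : (Fin (k - 1)) → ZMod 2 := fun j =>
  (pre.count (Fin.castLE (by omega) j) : ZMod 2) +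
    (pre.count (⟨k - 1, by omega⟩ : Fin (k + 1)) : ZMod 2)

/-- The word `f(w) ∈ F_{k-1}` associated with a word `w`: the product, over the occurrences of
the last letter `b_{k+1}` in `w` taken in order, of the generators `c_m` indexed by the indices
of those occurrences.  The first argument accumulates the prefix read so far. -/
def fword (k : ℕ) (pre : List (Fin (k + 1))) : List (Fin (k + 1)) → Fkm1 k
  | [] => 1
  | a :: rest =>
      (if a = Fin.last k then PresentedGroup.of (rels := relsF k) (idx k pre) else 1) *
        fword k (pre ++ [a]) rest

/-- The image in `G_{k+1}^k` of a word over the generators `b_1, …, b_{k+1}`. -/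
def wordToGnk (k : ℕ) (w : List (Fin (k + 1))) : Gnk k :=
  (w.map fun i => PresentedGroup.of (rels := relsG k) i).prod

namespace Stmt8

variable {k : ℕ}

/-- short name for generators -/
abbrev gen (i : Fin (k + 1)) : Gnk k := PresentedGroup.of (rels := relsG k) i

lemma rels_eq_one {r : FreeGroup (Fin (k+1))} (hr : r ∈ relsG k) :
    PresentedGroup.mk (relsG k) r = 1 :=
  (QuotientGroup.eq_one_iff _).mpr (Subgroup.subset_normalClosure hr)

lemma gen_sq (i : Fin (k+1)) : gen i * gen i = 1 := by
  have : PresentedGroup.mk (relsG k) (FreeGroup.of i ^ 2) = 1 :=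
    rels_eq_one (Or.inl ⟨i, rfl⟩)
  rwa [map_pow, pow_two] at this

lemma gen_inv (i : Fin (k+1)) : (gen i)⁻¹ = gen i := by
  rw [inv_eq_iff_mul_eq_one, gen_sq]

lemma wordToGnk_nil : wordToGnk k [] = 1 := rfl

lemma wordToGnk_cons (a : Fin (k+1)) (w : List (Fin (k+1))) :
    wordToGnk k (a :: w) = gen a * wordToGnk k w := by
  simp [wordToGnk]

lemma wordToGnk_append (u v : List (Fin (k+1))) :
    wordToGnk k (u ++ v) = wordToGnk k u * wordToGnk k v := by
  simp [wordToGnk]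

lemma wordToGnk_singleton (a : Fin (k+1)) : wordToGnk k [a] = gen a := by
  simp [wordToGnk]

lemma wordToGnk_reverse (u : List (Fin (k+1))) :
    wordToGnk k u.reverse = (wordToGnk k u)⁻¹ := by
  induction u with
  | nil => simp [wordToGnk]
  | cons a u ih =>
      rw [List.reverse_cons, wordToGnk_append, ih, wordToGnk_singleton, wordToGnk_cons,
        mul_inv_rev, gen_inv]

lemma block_sq (l : List (Fin (k+1))) (hnd : l.Nodup) (hlen : l.length = k+1) :
    wordToGnk k l * wordToGnk k l = 1 := by
  have hget : Function.Injective l.get := List.nodup_iff_injective_get.mp hnd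
  set f : Fin (k+1) → Fin (k+1) := fun i => l.get (Fin.cast hlen.symm i) with hf
  have hinj : Function.Injective f := by
    intro a b hab
    have := hget hab
    simpa [Fin.ext_iff] using this
  let σ : Equiv.Perm (Fin (k+1)) := Equiv.ofBijective f (Finite.injective_iff_bijective.mp hinj)
  have hofn : (List.ofFn fun j => σ j) = l := by
    apply List.ext_getElem (by simp [hlen])
    intro n h1 h2
    rw [List.getElem_ofFn]
    rfl
  have h1 : ((List.ofFn fun j : Fin (k+1) => FreeGroup.of (σ j)).prod) ^ 2 ∈ relsG k :=
    Or.inr ⟨σ, rfl⟩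
  have := rels_eq_one h1
  rw [map_pow, map_list_prod] at this
  have h2 : (List.map (PresentedGroup.mk (relsG k)) (List.ofFn fun j => FreeGroup.of (σ j)))
      = l.map (fun i => PresentedGroup.of (rels := relsG k) i) := by
    rw [List.map_ofFn, ← hofn, List.map_ofFn]
    rfl
  rw [h2] at this
  rw [← pow_two]
  exact this


/-- The last generator. -/
abbrev β : Gnk k := gen (Fin.last k)

lemma mem_Hk_of_ne_last {w : List (Fin (k+1))} (hw : ∀ a ∈ w, a ≠ Fin.last k) :
    wordToGnk k w ∈ Hk k := by
  refine Subgroup.list_prod_mem _ ?_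
  intro x hx
  rcases List.mem_map.mp hx with ⟨a, ha, rfl⟩
  rcases Fin.exists_castSucc_eq.mpr (hw a ha) with ⟨j, rfl⟩
  exact Subgroup.subset_closure ⟨j, rfl⟩

lemma exists_word_of_mem_Hk {x : Gnk k} (hx : x ∈ Hk k) :
    ∃ u : List (Fin (k+1)), (∀ a ∈ u, a ≠ Fin.last k) ∧ wordToGnk k u = x := by
  refine Subgroup.closure_induction ?_ ?_ ?_ ?_ hx
  · rintro x ⟨i, rfl⟩
    exact ⟨[Fin.castSucc i], by
      simpa using (Fin.castSucc_lt_last i).ne, wordToGnk_singleton _⟩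
  · exact ⟨[], by simp, rfl⟩
  · rintro x y - - ⟨u, hu, rfl⟩ ⟨v, hv, rfl⟩
    exact ⟨u ++ v, by
      intro a ha
      rcases List.mem_append.mp ha with h | h
      exacts [hu a h, hv a h], (wordToGnk_append u v)⟩
  · rintro x - ⟨u, hu, rfl⟩
    exact ⟨u.reverse, fun a ha => hu a (List.mem_reverse.mp ha), wordToGnk_reverse u⟩

/-- The subgroup of elements `x ∈ H_k` with `β x β ∈ H_k`. -/
def Tsub (k : ℕ) : Subgroup (Gnk k) where
  carrier := {x | x ∈ Hk k ∧ β * x * β ∈ Hk k}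
  one_mem' := by
    refine ⟨one_mem _, ?_⟩
    rw [mul_one, gen_sq]
    exact one_mem _
  mul_mem' := by
    rintro x y ⟨hx1, hx2⟩ ⟨hy1, hy2⟩
    refine ⟨mul_mem hx1 hy1, ?_⟩
    have hbb : (β : Gnk k) * β = 1 := gen_sq _
    have key : (β * x * β) * (β * y * β) = β * (x * y) * β := by
      have : (β * x * β) * (β * y * β) = β * x * (β * β) * (y * β) := by group
      rw [this, hbb, mul_one]
      group
    rw [← key]
    exact mul_mem hx2 hy2
  inv_mem' := by
    rintro x ⟨hx1, hx2⟩
    refine ⟨inv_mem hx1, ?_⟩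
    have : β * x⁻¹ * β = (β * x * β)⁻¹ := by
      rw [mul_inv_rev, mul_inv_rev, gen_inv (Fin.last k)]
      group
    rw [this]
    exact inv_mem hx2

lemma conj_block {l : List (Fin (k+1))} (hnd : l.Nodup) (hlen : l.length = k)
    (hnl : ∀ a ∈ l, a ≠ Fin.last k) :
    β * wordToGnk k l * β = (wordToGnk k l)⁻¹ := by
  have hnd' : (l ++ [Fin.last k]).Nodup := by
    rw [List.nodup_append]
    exact ⟨hnd, List.nodup_singleton _, by
      intro a ha b hb
      rw [List.mem_singleton.mp hb]
      exact hnl a ha⟩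
  have hlen' : (l ++ [Fin.last k]).length = k + 1 := by simp [hlen]
  have h := block_sq _ hnd' hlen'
  rw [wordToGnk_append, wordToGnk_singleton] at h
  have h2 : wordToGnk k l * (β * wordToGnk k l * β) = 1 := by
    calc wordToGnk k l * (β * wordToGnk k l * β)
        = wordToGnk k l * β * (wordToGnk k l * β) := by group
    _ = 1 := h
  exact eq_inv_of_mul_eq_one_right h2

lemma blockT {l : List (Fin (k+1))} (hnd : l.Nodup) (hlen : l.length = k)
    (hnl : ∀ a ∈ l, a ≠ Fin.last k) :
    wordToGnk k l ∈ Tsub k := by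
  refine ⟨mem_Hk_of_ne_last hnl, ?_⟩
  rw [conj_block hnd hlen hnl]
  exact inv_mem (mem_Hk_of_ne_last hnl)

/-- the letter `b_j` for `j : Fin (k-1)` -/
abbrev castL (j : Fin (k-1)) : Fin (k+1) := Fin.castLE (by omega) j

/-- the letter `b_k` -/
abbrev bkL : Fin (k+1) := (⟨k - 1, by omega⟩ : Fin (k+1))

lemma castL_inj : Function.Injective (castL (k := k)) := fun a b h => by
  simpa [castL, Fin.ext_iff] using h

lemma castL_ne_last (j : Fin (k-1)) : castL j ≠ Fin.last k := by
  intro hEq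
  have h' := congrArg Fin.val hEq
  simp only [Fin.coe_castLE, Fin.val_last] at h'
  have := j.isLt
  omega

lemma castL_ne_bk (j : Fin (k-1)) : castL j ≠ bkL := by
  intro hEq
  have h' := congrArg Fin.val hEq
  simp only [Fin.coe_castLE] at h'
  have := j.isLt
  omega

lemma bk_ne_last (hk : 1 ≤ k) : (bkL : Fin (k+1)) ≠ Fin.last k := by
  intro hEq
  have h' := congrArg Fin.val hEq
  simp only [Fin.val_last] at h'
  omega

/-- generic block membership: any arrangement of all the letters `b_1, …, b_k`
(`b_k` somewhere in the middle) lies in `Tsub`. -/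
lemma blockT_of (hk : 2 ≤ k) (L₁ L₂ : List (Fin (k-1))) (h : (L₁ ++ L₂).Nodup)
    (hlen : L₁.length + L₂.length = k - 1) :
    wordToGnk k (L₁.map castL ++ [bkL] ++ L₂.map castL) ∈ Tsub k := by
  rcases List.nodup_append.mp h with ⟨h1, h2, h12⟩
  apply blockT
  · rw [List.nodup_append, List.nodup_append]
    refine ⟨⟨h1.map castL_inj, List.nodup_singleton _, ?_⟩, h2.map castL_inj, ?_⟩
    · intro a ha b hb
      rcases List.mem_map.mp ha with ⟨j, _, rfl⟩
      rw [List.mem_singleton.mp hb]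
      exact castL_ne_bk j
    · intro a ha b hb
      rcases List.mem_map.mp hb with ⟨j', hj', rfl⟩
      rcases List.mem_append.mp ha with ha | ha
      · rcases List.mem_map.mp ha with ⟨j, hj, rfl⟩
        exact fun hjj => h12 j hj j' hj' (castL_inj hjj)
      · rw [List.mem_singleton.mp ha]
        exact (castL_ne_bk j').symm
  · simp only [List.length_append, List.length_map, List.length_singleton]
    omega
  · intro a ha
    rcases List.mem_append.mp ha with ha | ha
    · rcases List.mem_append.mp ha with ha | ha
      · rcases List.mem_map.mp ha with ⟨j, _, rfl⟩; exact castL_ne_last j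
      · have : a = bkL := by simpa using ha
        exact this ▸ bk_ne_last (by omega)
    · rcases List.mem_map.mp ha with ⟨j, _, rfl⟩; exact castL_ne_last j

/-! ### idx lemmas -/

lemma idx_nil : idx k [] = 0 := by
  funext j; simp [idx]

lemma idx_append (x y : List (Fin (k+1))) : idx k (x ++ y) = idx k x + idx k y := by
  funext j
  simp only [idx, List.count_append, Pi.add_apply]
  push_cast
  ring

/-- single-letter index contribution -/
abbrev dd (a : Fin (k+1)) : (Fin (k-1)) → ZMod 2 := idx k [a]

lemma idx_cons (a : Fin (k+1)) (w : List (Fin (k+1))) :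
    idx k (a :: w) = dd a + idx k w := by
  rw [show a :: w = [a] ++ w from rfl, idx_append]

lemma dd_castL (i : Fin (k-1)) : dd (castL i) = fun j => if j = i then 1 else 0 := by
  funext j
  have h2 : List.count (bkL : Fin (k+1)) [castL i] = 0 :=
    List.count_eq_zero.mpr (by
      simp only [List.mem_singleton]
      exact fun h => castL_ne_bk i h.symm)
  rcases eq_or_ne j i with rfl | hne
  · have h1 : List.count (castL j) [castL j] = 1 := by simp
    simp only [dd, idx, h1, h2]
    simp
  · have h1 : List.count (castL j) [castL i] = 0 :=
      List.count_eq_zero.mpr (by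
        simp only [List.mem_singleton]
        exact fun h => hne (castL_inj h))
    simp only [dd, idx, h1, h2]
    simp [hne]

lemma dd_bk : dd (bkL : Fin (k+1)) = fun _ => 1 := by
  funext j
  have h1 : List.count (castL j) [(bkL : Fin (k+1))] = 0 :=
    List.count_eq_zero.mpr (by
      simp only [List.mem_singleton]
      exact fun h => castL_ne_bk j h)
  have h2 : List.count (bkL : Fin (k+1)) [(bkL : Fin (k+1))] = 1 := by simp
  simp only [dd, idx, h1, h2]
  simp

lemma dd_last (hk : 1 ≤ k) : dd (Fin.last k) = 0 := by
  funext j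
  have h1 : List.count (castL j) [Fin.last k] = 0 :=
    List.count_eq_zero.mpr (by
      simp only [List.mem_singleton]
      exact fun h => castL_ne_last j h)
  have h2 : List.count (bkL : Fin (k+1)) [Fin.last k] = 0 :=
    List.count_eq_zero.mpr (by
      simp only [List.mem_singleton]
      exact fun h => bk_ne_last hk h)
  simp only [dd, idx, h1, h2]
  simp

/-! ### transversal -/

/-- support of a state -/
def tset (S : (Fin (k-1)) → ZMod 2) : Finset (Fin (k-1)) :=
  Finset.univ.filter (fun j => S j = 1)

def tlist (S : (Fin (k-1)) → ZMod 2) : List (Fin (k+1)) :=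
  ((tset S).sort (· ≤ ·)).map castL

def tG (S : (Fin (k-1)) → ZMod 2) : Gnk k := wordToGnk k (tlist S)

lemma mem_tset {S : (Fin (k-1)) → ZMod 2} {j : Fin (k-1)} : j ∈ tset S ↔ S j = 1 := by
  simp [tset]

lemma tset_zero : tset (0 : (Fin (k-1)) → ZMod 2) = ∅ := by
  ext j
  simp only [mem_tset, Finset.notMem_empty, iff_false, Pi.zero_apply]
  decide

lemma tG_zero : tG (0 : (Fin (k-1)) → ZMod 2) = 1 := by
  rw [tG, tlist, tset_zero]
  simp [wordToGnk]

lemma tset_add_castL_mem {S : (Fin (k-1)) → ZMod 2} {i : Fin (k-1)} (hi : S i = 1) :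
    tset (S + dd (castL i)) = (tset S).erase i := by
  ext j
  rw [dd_castL]
  simp only [mem_tset, Finset.mem_erase, Pi.add_apply, mem_tset]
  rcases eq_or_ne j i with rfl | hne
  · simp [hi]
  · simp [hne]

lemma tset_add_castL_not_mem {S : (Fin (k-1)) → ZMod 2} {i : Fin (k-1)} (hi : S i = 0) :
    tset (S + dd (castL i)) = insert i (tset S) := by
  ext j
  rw [dd_castL]
  simp only [mem_tset, Finset.mem_insert, Pi.add_apply, mem_tset]
  rcases eq_or_ne j i with rfl | hne
  · simp [hi]
  · simp [hne]

lemma tset_add_bk {S : (Fin (k-1)) → ZMod 2} :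
    tset (S + dd (bkL : Fin (k+1))) = (tset S)ᶜ := by
  ext j
  rw [dd_bk]
  simp only [mem_tset, Finset.mem_compl, Pi.add_apply, mem_tset]
  rcases (by decide : ∀ x : ZMod 2, x = 0 ∨ x = 1) (S j) with h | h <;> simp [h]

/-! ### the one-letter step lemma -/

lemma blockT_of' (hk : 2 ≤ k) (L : List (Fin (k-1))) (h : L.Nodup) (hlen : L.length = k - 1) :
    wordToGnk k (L.map castL ++ [bkL]) ∈ Tsub k := by
  have := blockT_of hk L [] (by simpa using h) (by simpa using hlen)
  simpa using this

lemma nodup_sort_compl (A : Finset (Fin (k-1))) :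
    ((A.sort (· ≤ ·)) ++ (Aᶜ.sort (· ≤ ·))).Nodup := by
  rw [List.nodup_append]
  refine ⟨Finset.sort_nodup _ _, Finset.sort_nodup _ _, ?_⟩
  intro a ha b hb
  rw [Finset.mem_sort] at ha hb
  rintro rfl
  exact (Finset.mem_compl.mp hb) ha

lemma length_sort_compl (A : Finset (Fin (k-1))) :
    ((A.sort (· ≤ ·)) ++ (Aᶜ.sort (· ≤ ·))).length = k - 1 := by
  rw [List.length_append, Finset.length_sort, Finset.length_sort]
  have := Finset.card_add_card_compl A
  simpa using this

lemma nodup_sort_insert (A : Finset (Fin (k-1))) (i : Fin (k-1)) (hi : i ∉ A)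
    (B : Finset (Fin (k-1))) (hB : B = (insert i A)ᶜ) :
    ((A.sort (· ≤ ·)) ++ i :: (B.sort (· ≤ ·))).Nodup := by
  subst hB
  rw [List.nodup_append]
  refine ⟨Finset.sort_nodup _ _, ?_, ?_⟩
  · rw [List.nodup_cons]
    refine ⟨?_, Finset.sort_nodup _ _⟩
    rw [Finset.mem_sort, Finset.mem_compl]
    exact fun h => h (Finset.mem_insert_self i A)
  · intro a ha b hb
    rw [Finset.mem_sort] at ha
    rintro rfl
    rcases List.mem_cons.mp hb with rfl | hb
    · exact hi ha
    · rw [Finset.mem_sort, Finset.mem_compl] at hb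
      exact hb (Finset.mem_insert_of_mem ha)

lemma length_sort_insert (A : Finset (Fin (k-1))) (i : Fin (k-1)) (hi : i ∉ A)
    (B : Finset (Fin (k-1))) (hB : B = (insert i A)ᶜ) :
    ((A.sort (· ≤ ·)) ++ i :: (B.sort (· ≤ ·))).length = k - 1 := by
  subst hB
  rw [List.length_append, List.length_cons, Finset.length_sort, Finset.length_sort,
    Finset.card_compl, Finset.card_insert_of_notMem hi]
  have h1 : (insert i A).card ≤ Fintype.card (Fin (k-1)) := Finset.card_le_univ _
  rw [Finset.card_insert_of_notMem hi] at h1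
  simp only [Fintype.card_fin] at h1 ⊢
  omega

lemma step_mem (hk : 2 ≤ k) (S : (Fin (k-1)) → ZMod 2) (a : Fin (k+1)) (ha : a ≠ Fin.last k) :
    tG S * gen a * (tG (S + dd a))⁻¹ ∈ Tsub k := by
  have hcases : a = bkL ∨ ∃ i : Fin (k-1), a = castL i := by
    have hval : (a : ℕ) < k + 1 := a.isLt
    have hne : (a : ℕ) ≠ k := fun h => ha (Fin.ext (by simp [h, Fin.val_last]))
    rcases eq_or_ne (a : ℕ) (k-1) with h | h
    · left; exact Fin.ext (by simp [h])
    · right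
      refine ⟨⟨(a : ℕ), by omega⟩, Fin.ext ?_⟩
      simp [Fin.coe_castLE]
  rcases hcases with rfl | ⟨i, rfl⟩
  · -- `a = b_k`: a single block
    have hts : tset (S + dd (bkL : Fin (k+1))) = (tset S)ᶜ := tset_add_bk
    have e : tG S * gen (bkL : Fin (k+1)) * (tG (S + dd (bkL : Fin (k+1))))⁻¹ =
        wordToGnk k ((((tset S).sort (· ≤ ·)).map castL) ++ [bkL] ++
          (((((tset S)ᶜ).sort (· ≤ ·)).reverse).map castL)) := by
      rw [List.map_reverse, wordToGnk_append, wordToGnk_append, wordToGnk_singleton,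
        wordToGnk_reverse]
      have h2 : tG (S + dd (bkL : Fin (k+1)))
          = wordToGnk k ((((tset S)ᶜ).sort (· ≤ ·)).map castL) := by
        rw [tG, tlist, hts]
      rw [h2]
      rfl
    rw [e]
    apply blockT_of hk
    · rw [List.nodup_append]
      refine ⟨Finset.sort_nodup _ _, List.nodup_reverse.mpr (Finset.sort_nodup _ _), ?_⟩
      intro x hx y hy
      rw [Finset.mem_sort] at hx
      rw [List.mem_reverse, Finset.mem_sort] at hy
      rintro rfl
      exact (Finset.mem_compl.mp hy) hx
    · rw [List.length_reverse, ← List.length_append]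
      exact length_sort_compl _
  · -- `a = b_i`
    have expand : ∀ (x y z g a : Gnk k), a * a = 1 →
        (x * a * y⁻¹) * ((y * (a * z)) * g) = (x * z) * g := by
      intro x y z g a h
      have h2 : (x * a * y⁻¹) * ((y * (a * z)) * g) = x * (a * a) * (z * g) := by group
      rw [h2, h, mul_one]
      group
    set ga := gen (castL i) with hga
    rcases (by decide : ∀ x : ZMod 2, x = 0 ∨ x = 1) (S i) with hSi | hSi
    · -- `i ∉ S`
      have hts : tset (S + dd (castL i)) = insert i (tset S) := tset_add_castL_not_mem hSi
      have hinotmem : i ∉ tset S := fun h => by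
        rw [mem_tset.mp h] at hSi
        exact one_ne_zero hSi
      set S' := S + dd (castL i) with hS'
      have htG : tG S' = wordToGnk k (((tset S').sort (· ≤ ·)).map castL) := rfl
      have hB₁ : wordToGnk k ((((tset S).sort (· ≤ ·)) ++ i :: ((tset S')ᶜ.sort (· ≤ ·))).map castL
          ++ [bkL]) ∈ Tsub k :=
        blockT_of' hk _ (nodup_sort_insert _ _ hinotmem _ (by rw [hts]))
          (length_sort_insert _ _ hinotmem _ (by rw [hts]))
      have hB₂ : wordToGnk k ((((tset S').sort (· ≤ ·)) ++ ((tset S')ᶜ.sort (· ≤ ·))).map castL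
          ++ [bkL]) ∈ Tsub k :=
        blockT_of' hk _ (nodup_sort_compl _) (length_sort_compl _)
      have key : (tG S * ga * (tG S')⁻¹) *
          wordToGnk k ((((tset S').sort (· ≤ ·)) ++ ((tset S')ᶜ.sort (· ≤ ·))).map castL ++ [bkL])
          = wordToGnk k ((((tset S).sort (· ≤ ·)) ++ i :: ((tset S')ᶜ.sort (· ≤ ·))).map castL
              ++ [bkL]) := by
        simp only [List.map_append, List.map_cons, wordToGnk_append, wordToGnk_cons,
          wordToGnk_singleton, tG, tlist]
        rw [hga]
        group
      have : tG S * ga * (tG S')⁻¹ =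
          wordToGnk k ((((tset S).sort (· ≤ ·)) ++ i :: ((tset S')ᶜ.sort (· ≤ ·))).map castL
            ++ [bkL]) *
          (wordToGnk k ((((tset S').sort (· ≤ ·)) ++ ((tset S')ᶜ.sort (· ≤ ·))).map castL
            ++ [bkL]))⁻¹ := by
        rw [← key]
        group
      rw [this]
      exact mul_mem hB₁ (inv_mem hB₂)
    · -- `i ∈ S`
      have hts : tset (S + dd (castL i)) = (tset S).erase i := tset_add_castL_mem hSi
      have himem : i ∈ tset S := mem_tset.mpr hSi
      set S' := S + dd (castL i) with hS'
      have htG : tG S' = wordToGnk k (((tset S').sort (· ≤ ·)).map castL) := rfl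
      have hins : insert i ((tset S).erase i) = tset S := Finset.insert_erase himem
      have hB₁ : wordToGnk k ((((tset S).sort (· ≤ ·)) ++ ((tset S)ᶜ.sort (· ≤ ·))).map castL
          ++ [bkL]) ∈ Tsub k :=
        blockT_of' hk _ (nodup_sort_compl _) (length_sort_compl _)
      have hB₂ : wordToGnk k ((((tset S').sort (· ≤ ·)) ++ i :: ((tset S)ᶜ.sort (· ≤ ·))).map castL
          ++ [bkL]) ∈ Tsub k := by
        refine blockT_of' hk _ ?_ ?_
        · rw [hts]
          exact nodup_sort_insert _ _ (Finset.notMem_erase i _) _ (by rw [hins])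
        · rw [hts]
          exact length_sort_insert _ _ (Finset.notMem_erase i _) _ (by rw [hins])
      have key : (tG S * ga * (tG S')⁻¹) *
          wordToGnk k ((((tset S').sort (· ≤ ·)) ++ i :: ((tset S)ᶜ.sort (· ≤ ·))).map castL
            ++ [bkL])
          = wordToGnk k ((((tset S).sort (· ≤ ·)) ++ ((tset S)ᶜ.sort (· ≤ ·))).map castL
              ++ [bkL]) := by
        simp only [List.map_append, List.map_cons, wordToGnk_append, wordToGnk_cons,
          wordToGnk_singleton, tG, tlist]
        exact expand _ _ _ _ _ (gen_sq (castL i))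
      have : tG S * ga * (tG S')⁻¹ =
          wordToGnk k ((((tset S).sort (· ≤ ·)) ++ ((tset S)ᶜ.sort (· ≤ ·))).map castL
            ++ [bkL]) *
          (wordToGnk k ((((tset S').sort (· ≤ ·)) ++ i :: ((tset S)ᶜ.sort (· ≤ ·))).map castL
            ++ [bkL]))⁻¹ := by
        rw [← key]
        group
      rw [this]
      exact mul_mem hB₁ (inv_mem hB₂)

/-! ### the transversal induction -/

lemma words_mem_T (hk : 2 ≤ k) (u : List (Fin (k+1))) (hu : ∀ a ∈ u, a ≠ Fin.last k) :
    ∀ S, ∃ p ∈ Tsub k, tG S * wordToGnk k u = p * tG (S + idx k u) := by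
  induction u with
  | nil =>
      intro S
      exact ⟨1, one_mem _, by simp [wordToGnk_nil, idx_nil]⟩
  | cons a r ih =>
      intro S
      obtain ⟨p₂, hp₂, h₂⟩ := ih (fun x hx => hu x (List.mem_cons_of_mem a hx)) (S + dd a)
      refine ⟨(tG S * gen a * (tG (S + dd a))⁻¹) * p₂,
        mul_mem (step_mem hk S a (hu a List.mem_cons_self)) hp₂, ?_⟩
      have hidx : S + idx k (a :: r) = (S + dd a) + idx k r := by
        rw [idx_cons]; abel
      rw [hidx, wordToGnk_cons, mul_assoc (tG S * gen a * (tG (S + dd a))⁻¹) p₂ _, ← h₂]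
      group

lemma key_mem (hk : 2 ≤ k) (u : List (Fin (k+1))) (hu : ∀ a ∈ u, a ≠ Fin.last k)
    (hidx : idx k u = 0) : wordToGnk k u ∈ Tsub k := by
  obtain ⟨p, hp, h⟩ := words_mem_T hk u hu 0
  rw [tG_zero, one_mul, hidx, add_zero, tG_zero, mul_one] at h
  rwa [h]

/-! ### the `ZMod 2` abelianization of `Gnk` -/

lemma sq_one_mult (y : Multiplicative ((Fin (k-1)) → ZMod 2)) : y ^ 2 = 1 := by
  have : y.toAdd + y.toAdd = 0 := by
    funext j
    rcases (by decide : ∀ x : ZMod 2, x + x = 0) (y.toAdd j) with h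
    exact h
  have h2 : y * y = 1 := by
    rw [← ofAdd_toAdd y, ← ofAdd_add, this, ofAdd_zero]
  rw [pow_two, h2]

def vmap : Gnk k →* Multiplicative ((Fin (k-1)) → ZMod 2) :=
  PresentedGroup.toGroup (f := fun a => Multiplicative.ofAdd (dd a)) (by
    rintro r (⟨i, rfl⟩ | ⟨σ, rfl⟩) <;> rw [map_pow] <;> exact sq_one_mult _)

lemma vmap_gen (a : Fin (k+1)) : vmap (gen a) = Multiplicative.ofAdd (dd a) :=
  PresentedGroup.toGroup.of _

lemma vmap_word (u : List (Fin (k+1))) :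
    vmap (wordToGnk k u) = Multiplicative.ofAdd (idx k u) := by
  induction u with
  | nil => simp [wordToGnk_nil, idx_nil]
  | cons a r ih =>
      rw [wordToGnk_cons, map_mul, vmap_gen, ih, ← ofAdd_add, idx_cons]

/-! ### the free product side -/

/-- generator of `Fkm1` -/
abbrev cF (m : (Fin (k-1)) → ZMod 2) : Fkm1 k := PresentedGroup.of (rels := relsF k) m

lemma cF_sq (m : (Fin (k-1)) → ZMod 2) : cF m * cF m = 1 := by
  have : PresentedGroup.mk (relsF k) (FreeGroup.of m ^ 2) = 1 :=
    (QuotientGroup.eq_one_iff _).mpr (Subgroup.subset_normalClosure ⟨m, rfl⟩)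
  rwa [map_pow, pow_two] at this

/-- the sequence of indices of the occurrences of the last letter -/
def ms (k : ℕ) (pre : List (Fin (k+1))) : List (Fin (k+1)) → List ((Fin (k-1)) → ZMod 2)
  | [] => []
  | a :: rest => (if a = Fin.last k then [idx k pre] else []) ++ ms k (pre ++ [a]) rest

lemma fword_eq_ms_prod (w pre : List (Fin (k+1))) :
    fword k pre w = ((ms k pre w).map cF).prod := by
  induction w generalizing pre with
  | nil => simp [fword, ms]
  | cons a r ih =>
      rcases eq_or_ne a (Fin.last k) with rfl | hne
      · simp [fword, ms, ih]
      · simp [fword, ms, hne, ih]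

lemma ms_eq_nil_iff (w pre : List (Fin (k+1))) :
    ms k pre w = [] ↔ ∀ a ∈ w, a ≠ Fin.last k := by
  induction w generalizing pre with
  | nil => simp [ms]
  | cons a r ih =>
      rcases eq_or_ne a (Fin.last k) with rfl | hne
      · simp [ms]
      · simp [ms, hne, ih (pre ++ [a])]

/-- the free product detector -/
def θmap : Fkm1 k →*
    Monoid.CoprodI (fun _ : ((Fin (k-1)) → ZMod 2) => Multiplicative (ZMod 2)) :=
  PresentedGroup.toGroup
    (f := fun m => Monoid.CoprodI.of (i := m) (Multiplicative.ofAdd 1)) (by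
      rintro r ⟨m, rfl⟩
      rw [map_pow, FreeGroup.lift_apply_of, ← map_pow]
      have : (Multiplicative.ofAdd (1 : ZMod 2)) ^ 2 = 1 := by decide
      rw [this, map_one])

lemma θmap_cF (m : (Fin (k-1)) → ZMod 2) :
    θmap (cF m) = Monoid.CoprodI.of (i := m) (Multiplicative.ofAdd 1) :=
  PresentedGroup.toGroup.of _

lemma chain_prod_ne_one (l : List ((Fin (k-1)) → ZMod 2)) (hne : l ≠ [])
    (hchain : l.Chain' (· ≠ ·)) :
    ((l.map fun m => Monoid.CoprodI.of (i := m)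
        (Multiplicative.ofAdd (1 : ZMod 2)))).prod ≠ 1 := by
  classical
  set W : Monoid.CoprodI.Word (fun _ : ((Fin (k-1)) → ZMod 2) => Multiplicative (ZMod 2)) :=
    { toList := l.map fun m => ⟨m, Multiplicative.ofAdd 1⟩
      ne_one := by
        intro x hx
        rcases List.mem_map.mp hx with ⟨m, _, rfl⟩
        exact (by decide : (Multiplicative.ofAdd (1 : ZMod 2)) ≠ (1 : Multiplicative (ZMod 2)))
      chain_ne := by
        rw [List.isChain_map]
        exact hchain } with hW
  have hprod : W.prod = ((l.map fun m => Monoid.CoprodI.of (i := m)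
      (Multiplicative.ofAdd (1 : ZMod 2)))).prod := by
    rw [Monoid.CoprodI.Word.prod, hW]
    rw [List.map_map]
    rfl
  intro hcon
  have h1 : W.prod = Monoid.CoprodI.Word.empty.prod := by
    rw [hprod, hcon, Monoid.CoprodI.Word.prod_empty]
  have h2 : W = Monoid.CoprodI.Word.empty := by
    have hinj : Function.Injective
        (Monoid.CoprodI.Word.prod (M := fun _ : ((Fin (k-1)) → ZMod 2) =>
          Multiplicative (ZMod 2))) := by
      intro x y hxy
      have : Monoid.CoprodI.Word.equiv.symm x = Monoid.CoprodI.Word.equiv.symm y := hxy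
      exact Monoid.CoprodI.Word.equiv.symm.injective this
    exact hinj h1
  have h3 := congrArg Monoid.CoprodI.Word.toList h2
  rw [hW] at h3
  simp only [Monoid.CoprodI.Word.empty] at h3
  exact hne (List.map_eq_nil_iff.mp h3)

lemma idx_eq_zero_of_clean (hk : 2 ≤ k) {u : List (Fin (k+1))}
    (h : idx k (Fin.last k :: u) = idx k []) : idx k u = 0 := by
  have h2 : idx k (Fin.last k :: u) = idx k u := by
    rw [idx_cons, dd_last (by omega)]
    abel
  rw [h2, idx_nil] at h
  exact h

lemma ms_head (hk : 2 ≤ k) (w : List (Fin (k+1))) :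
    ∀ pre, ms k pre w ≠ [] → ∃ u w₂, w = u ++ Fin.last k :: w₂ ∧
      (∀ a ∈ u, a ≠ Fin.last k) ∧
      ms k pre w = idx k (pre ++ u) :: ms k ((pre ++ u) ++ [Fin.last k]) w₂ := by
  induction w with
  | nil => intro pre h; exact absurd rfl h
  | cons a r ih =>
      intro pre h
      rcases eq_or_ne a (Fin.last k) with rfl | hne
      · refine ⟨[], r, by simp, by simp, ?_⟩
        simp [ms]
      · have h' : ms k (pre ++ [a]) r ≠ [] := by
          simpa [ms, hne] using h
        obtain ⟨u, w₂, hru, hclean, hms⟩ := ih (pre ++ [a]) h'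
        refine ⟨a :: u, w₂, by simp [hru], ?_, ?_⟩
        · intro x hx
          rcases List.mem_cons.mp hx with rfl | hx
          exacts [hne, hclean x hx]
        · have : ms k pre (a :: r) = ms k (pre ++ [a]) r := by simp [ms, hne]
          rw [this, hms]
          simp [List.append_assoc]

lemma ms_get_adjacent (hk : 2 ≤ k) (w : List (Fin (k+1))) :
    ∀ pre i, ∀ (hi : i + 1 < (ms k pre w).length),
      (ms k pre w)[i]'(by omega) = (ms k pre w)[i+1]'hi →
      ∃ w₁ u w₂, w = w₁ ++ Fin.last k :: (u ++ Fin.last k :: w₂) ∧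
        (∀ a ∈ u, a ≠ Fin.last k) ∧ idx k u = 0 := by
  induction w with
  | nil => intro pre i hi _; simp [ms] at hi
  | cons a r ih =>
      intro pre i hi heq
      rcases eq_or_ne a (Fin.last k) with rfl | hne
      · have hms : ms k pre (Fin.last k :: r)
            = idx k pre :: ms k (pre ++ [Fin.last k]) r := by simp [ms]
        cases i with
        | zero =>
          -- the first two occurrences are adjacent
          have hlen : ms k (pre ++ [Fin.last k]) r ≠ [] := by
            rw [hms] at hi
            simp only [List.length_cons] at hi
            intro hnil
            rw [hnil] at hi
            simp at hi
          obtain ⟨u, w₂, hru, hclean, hms2⟩ := ms_head hk r (pre ++ [Fin.last k]) hlen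
          refine ⟨[], u, w₂, by simp [hru], hclean, ?_⟩
          have hval : (ms k pre (Fin.last k :: r))[0]'(by omega)
              = idx k pre := by
            rw [List.getElem_of_eq hms]
            simp
          have hval2 : (ms k pre (Fin.last k :: r))[1]'hi
              = idx k ((pre ++ [Fin.last k]) ++ u) := by
            rw [List.getElem_of_eq hms]
            simp only [List.getElem_cons_succ]
            rw [List.getElem_of_eq hms2]
            simp
          have heq2 : idx k pre = idx k ((pre ++ [Fin.last k]) ++ u) :=
            (hval.symm.trans heq).trans hval2
          have : idx k pre = idx k pre + (dd (Fin.last k) + idx k u) := by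
            calc idx k pre = idx k (pre ++ [Fin.last k] ++ u) := heq2
            _ = idx k pre + idx k (Fin.last k :: u) := by
                rw [List.append_assoc, idx_append]
                rfl
            _ = idx k pre + (dd (Fin.last k) + idx k u) := by rw [idx_cons]
          have h0 : dd (Fin.last k) + idx k u = 0 := left_eq_add.mp this
          rw [dd_last (by omega : 1 ≤ k), zero_add] at h0
          exact h0
        | succ j =>
          have hi' : j + 1 < (ms k (pre ++ [Fin.last k]) r).length := by
            rw [hms] at hi
            simp only [List.length_cons] at hi
            omega
          have e0 : (ms k pre (Fin.last k :: r))[j+1]'(by omega)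
              = (ms k (pre ++ [Fin.last k]) r)[j]'(by omega) := by
            rw [List.getElem_of_eq hms]
            simp
          have e1 : (ms k pre (Fin.last k :: r))[j+1+1]'hi
              = (ms k (pre ++ [Fin.last k]) r)[j+1]'hi' := by
            rw [List.getElem_of_eq hms]
            simp
          have heq' : (ms k (pre ++ [Fin.last k]) r)[j]'(by omega)
              = (ms k (pre ++ [Fin.last k]) r)[j+1]'hi' :=
            (e0.symm.trans heq).trans e1
          obtain ⟨w₁, u, w₂, hrw, hclean, hidx⟩ := ih (pre ++ [Fin.last k]) j hi' heq'
          exact ⟨Fin.last k :: w₁, u, w₂, by simp [hrw], hclean, hidx⟩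
      · have hms : ms k pre (a :: r) = ms k (pre ++ [a]) r := by simp [ms, hne]
        have hi' : i + 1 < (ms k (pre ++ [a]) r).length := by rw [hms] at hi; exact hi
        have e0 : (ms k pre (a :: r))[i]'(by omega)
            = (ms k (pre ++ [a]) r)[i]'(by omega) := List.getElem_of_eq hms _
        have e1 : (ms k pre (a :: r))[i+1]'hi
            = (ms k (pre ++ [a]) r)[i+1]'hi' := List.getElem_of_eq hms _
        have heq' : (ms k (pre ++ [a]) r)[i]'(by omega) = (ms k (pre ++ [a]) r)[i+1]'hi' :=
          (e0.symm.trans heq).trans e1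
        obtain ⟨w₁, u, w₂, hrw, hclean, hidx⟩ := ih (pre ++ [a]) i hi' heq'
        exact ⟨a :: w₁, u, w₂, by simp [hrw], hclean, hidx⟩

/-! ### fword bookkeeping -/

lemma fword_append (x : List (Fin (k+1))) :
    ∀ (pre y : List (Fin (k+1))), fword k pre (x ++ y) = fword k pre x * fword k (pre ++ x) y := by
  induction x with
  | nil => intro pre y; simp [fword]
  | cons a r ih =>
      intro pre y
      show fword k pre (a :: (r ++ y)) = _
      rw [fword, fword, ih (pre ++ [a]) y, mul_assoc]
      congr 2
      simp

lemma fword_clean (x : List (Fin (k+1))) :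
    ∀ pre, (∀ a ∈ x, a ≠ Fin.last k) → fword k pre x = 1 := by
  induction x with
  | nil => intro pre _; rfl
  | cons a r ih =>
      intro pre h
      rw [fword, if_neg (h a List.mem_cons_self), one_mul]
      exact ih (pre ++ [a]) (fun x hx => h x (List.mem_cons_of_mem a hx))

lemma fword_congr (u : List (Fin (k+1))) :
    ∀ pre pre', idx k pre = idx k pre' → fword k pre u = fword k pre' u := by
  induction u with
  | nil => intro pre pre' _; rfl
  | cons a r ih =>
      intro pre pre' h
      rw [fword, fword, h]
      congr 1
      exact ih (pre ++ [a]) (pre' ++ [a]) (by rw [idx_append, idx_append, h])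

lemma exists_adjacent (hk : 2 ≤ k) (w : List (Fin (k+1))) (h : fword k [] w = 1) :
    (∀ a ∈ w, a ≠ Fin.last k) ∨
      ∃ w₁ u w₂, w = w₁ ++ Fin.last k :: (u ++ Fin.last k :: w₂) ∧
        (∀ a ∈ u, a ≠ Fin.last k) ∧ idx k u = 0 := by
  by_cases hc : List.Chain' (· ≠ ·) (ms k [] w)
  · left
    rcases eq_or_ne (ms k [] w) [] with hnil | hne
    · exact (ms_eq_nil_iff w []).mp hnil
    · exfalso
      have h1 : θmap (fword k [] w) = 1 := by rw [h, map_one]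
      rw [fword_eq_ms_prod, map_list_prod, List.map_map] at h1
      have h2 : (θmap (k := k)) ∘ cF = fun m => Monoid.CoprodI.of
          (M := fun _ : ((Fin (k-1)) → ZMod 2) => Multiplicative (ZMod 2)) (i := m)
          (Multiplicative.ofAdd (1 : ZMod 2)) := funext fun m => θmap_cF m
      rw [h2] at h1
      exact chain_prod_ne_one _ hne hc h1
  · right
    change ¬List.IsChain _ _ at hc
    rw [List.isChain_iff_getElem] at hc
    push_neg at hc
    obtain ⟨i, hi, heq⟩ := hc
    have hi' : i + 1 < (ms k [] w).length := by omega
    have heq' : (ms k [] w)[i]'(by omega) = (ms k [] w)[i+1]'hi' := by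
      simpa [List.get_eq_getElem] using heq
    exact ms_get_adjacent hk w [] i hi' heq'

/-! ### main assembly -/

lemma main_aux (hk : 2 ≤ k) :
    ∀ n (w : List (Fin (k+1))), w.count (Fin.last k) ≤ n → fword k [] w = 1 →
      wordToGnk k w ∈ Hk k := by
  intro n
  induction n with
  | zero =>
      intro w hcount h
      rcases exists_adjacent hk w h with hclean | ⟨w₁, u, w₂, rfl, hu, hidx⟩
      · exact mem_Hk_of_ne_last hclean
      · exfalso
        have hmem : Fin.last k ∈ w₁ ++ Fin.last k :: (u ++ Fin.last k :: w₂) := by simp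
        exact (List.count_eq_zero.mp (Nat.le_zero.mp hcount)) hmem
  | succ n ihn =>
      intro w hcount h
      rcases exists_adjacent hk w h with hclean | ⟨w₁, u, w₂, rfl, hu, hidx⟩
      · exact mem_Hk_of_ne_last hclean
      · have huT : wordToGnk k u ∈ Tsub k := key_mem hk u hu hidx
        have hβ : β * wordToGnk k u * β ∈ Hk k := huT.2
        obtain ⟨u'', hu''c, hu''⟩ := exists_word_of_mem_Hk hβ
        have hcu : u.count (Fin.last k) = 0 :=
          List.count_eq_zero.mpr (fun hmem => hu _ hmem rfl)
        have hcu'' : u''.count (Fin.last k) = 0 :=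
          List.count_eq_zero.mpr (fun hmem => hu''c _ hmem rfl)
        have hL0 : idx k [Fin.last k] = 0 := dd_last (by omega : 1 ≤ k)
        -- the index of u'' vanishes
        have hidxu'' : idx k u'' = 0 := by
          have h1 : Multiplicative.ofAdd (idx k u'') = vmap (wordToGnk k u'') :=
            (vmap_word u'').symm
          rw [hu''] at h1
          have h2 : vmap (β * wordToGnk k u * β) = 1 := by
            rw [map_mul, map_mul, vmap_word, vmap_gen, dd_last (by omega : 1 ≤ k), hidx]
            simp
          rw [h2, ← ofAdd_zero] at h1
          exact Multiplicative.ofAdd.injective h1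
        -- the two group elements agree
        have hG : wordToGnk k (w₁ ++ Fin.last k :: (u ++ Fin.last k :: w₂))
            = wordToGnk k (w₁ ++ (u'' ++ w₂)) := by
          rw [wordToGnk_append, wordToGnk_cons, wordToGnk_append, wordToGnk_cons,
            wordToGnk_append, wordToGnk_append, hu'']
          group
        -- the count decreases
        have hcnt : (w₁ ++ (u'' ++ w₂)).count (Fin.last k) ≤ n := by
          have e1 : (w₁ ++ Fin.last k :: (u ++ Fin.last k :: w₂)).count (Fin.last k)
              = w₁.count (Fin.last k) + w₂.count (Fin.last k) + 2 := by
            simp [List.count_append, List.count_cons, hcu]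
            omega
          have e2 : (w₁ ++ (u'' ++ w₂)).count (Fin.last k)
              = w₁.count (Fin.last k) + w₂.count (Fin.last k) := by
            simp [List.count_append, hcu'']
          rw [e1] at hcount
          rw [e2]
          omega
        -- the invariant is preserved
        have hpre_eq : idx k (w₁ ++ u'') = idx k (w₁ ++ [Fin.last k] ++ u ++ [Fin.last k]) := by
          rw [idx_append, idx_append, idx_append, idx_append, hidxu'', hidx, hL0]
          abel
        have hw : fword k [] (w₁ ++ Fin.last k :: (u ++ Fin.last k :: w₂))
            = fword k [] w₁ * fword k (w₁ ++ [Fin.last k] ++ u ++ [Fin.last k]) w₂ := by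
          rw [fword_append, List.nil_append]
          have h1 : fword k w₁ (Fin.last k :: (u ++ Fin.last k :: w₂))
              = cF (idx k w₁) * fword k (w₁ ++ [Fin.last k]) (u ++ Fin.last k :: w₂) := by
            rw [fword, if_pos rfl]
          rw [h1, fword_append, fword_clean u _ hu, one_mul]
          have h2 : fword k (w₁ ++ [Fin.last k] ++ u) (Fin.last k :: w₂)
              = cF (idx k (w₁ ++ [Fin.last k] ++ u)) *
                fword k (w₁ ++ [Fin.last k] ++ u ++ [Fin.last k]) w₂ := by
            rw [fword, if_pos rfl]
          rw [h2]
          have h3 : idx k (w₁ ++ [Fin.last k] ++ u) = idx k w₁ := by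
            rw [idx_append, idx_append, hL0, hidx]
            abel
          rw [h3]
          have h4 : cF (idx k w₁) * (cF (idx k w₁) *
              fword k (w₁ ++ [Fin.last k] ++ u ++ [Fin.last k]) w₂)
              = fword k (w₁ ++ [Fin.last k] ++ u ++ [Fin.last k]) w₂ := by
            rw [← mul_assoc, cF_sq, one_mul]
          rw [h4]
        have hw' : fword k [] (w₁ ++ (u'' ++ w₂))
            = fword k [] w₁ * fword k (w₁ ++ u'') w₂ := by
          rw [fword_append, List.nil_append, fword_append, fword_clean u'' _ hu''c, one_mul]
        have hf : fword k [] (w₁ ++ (u'' ++ w₂)) = 1 := by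
          rw [hw', fword_congr w₂ _ _ hpre_eq, ← hw, h]
        have hmem := ihn (w₁ ++ (u'' ++ w₂)) hcnt hf
        rw [hG]
        exact hmem

end Stmt8

/-- Let `k ≥ 2` and let `w` be a word in the generators `b_1, …, b_{k+1}` of
`G_{k+1}^k`.  If the element `f(w)` of the free product `F_{k-1}`, given as the ordered product
of the generators `c_{m_p}` over the occurrences `p` of `b_{k+1}` in `w`, is trivial, then the
image of `w` in `G_{k+1}^k` belongs to the subgroup `H_k`. -/
theorem stmt_8 (k : ℕ) (hk : 2 ≤ k) (w : List (Fin (k + 1)))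
    (h : fword k [] w = 1) : wordToGnk k w ∈ Hk k := by
  exact Stmt8.main_aux hk (w.count (Fin.last k)) w le_rfl h
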